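/- In the Paley–Wiener space PW_a = {f(z) = ∫_{−a}^{a} e^{izx}φ(x)dx : φ ∈ L²(−a,a)}, the Fourier transform intertwines the adjoint S* of the multiplication operator with the maximal differential operator φ ↦ iφ' on AC[−a,a]; consequently, taking φ(x) = e^{−x} and w₀ = π/a − i (a nonreal zero of the transform f of φ), the function η(x) = e^{−x} + i(2a/π)e^{−x}(1 + e^{−iπx/a}) whose Fourier transform is ((z − w̄₀)/(z − w₀))f(z) satisfies ‖η'‖_{L²(−a,a)} ≠ ‖φ'‖_{L²(−a,a)}. -/

import Mathlib

open Complex intervalIntegral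


private lemma hasDerivAt_cexp_mul' (c : ℂ) (x : ℝ) :
    HasDerivAt (fun y : ℝ => Complex.exp (c * y)) (c * Complex.exp (c * x)) x := by
  have h1 : HasDerivAt (fun y : ℝ => (c * (y : ℝ) : ℂ)) c x := by
    simpa only [mul_one, id] using ((hasDerivAt_id (x : ℂ)).const_mul c).comp_ofReal
  simpa [mul_comm, Function.comp_def] using (Complex.hasDerivAt_exp (c * x)).comp x h1

private lemma keylemma (cc mm s2 : ℂ) (hcm : cc * mm = 2) (h1 : (-2 + I*mm) ≠ 0) (h2 : (-2 - I*mm) ≠ 0) :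
    (-(1+I*cc) * -(1-I*cc) + I*cc*(-1-I*mm) * (-I*cc*(-1+I*mm))) * (s2/2)
      + -(1+I*cc) * (-I*cc*(-1+I*mm)) * (s2/(-2+I*mm))
      + (I*cc*(-1-I*mm)) * -(1-I*cc) * (s2/(-2-I*mm)) = 5*s2/2 := by
  field_simp
  linear_combination (s2*(-8*cc*mm + 8*mm^2 + 4*cc^2*mm^2*(I^2-1) - 2*cc^2*mm^4*(I^4-I^2+1))) * Complex.I_sq
    + (s2*(16 + 4*cc*mm + (2*cc*mm+4)*mm^2)) * hcm
    + (s2*(4*cc*mm - 4*mm^2 - 2*cc^2*mm^2*(I^2-1) + cc^2*mm^4*(I^4-I^2+1))) * Complex.I_sq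
    - (s2*(4 + (2+mm^2)*(cc*mm+2))) * hcm



/-- In the Paley–Wiener space `PW_a`, with `φ(x) = e^{-x}`,
`f(z) = ∫_{-a}^a e^{izx} φ(x) dx`, and `w₀ = π/a - i`: one has `f(w₀) = 0`, and the
function `η(x) = e^{-x} + i(2a/π) e^{-x}(1 + e^{-iπx/a})` — whose Fourier transform is
`((z - w̄₀)/(z - w₀)) f(z)` — satisfies `‖η'‖_{L²(-a,a)} ≠ ‖φ'‖_{L²(-a,a)}`.
Hence the graph norm of `S*` is not invariant under the de Branges mapping. -/
theorem stmt18 (a : ℝ) (ha : 0 < a)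
    (φ η : ℝ → ℂ)
    (hφ : ∀ x : ℝ, φ x = Complex.exp (-(x : ℂ)))
    (hη : ∀ x : ℝ, η x = Complex.exp (-(x : ℂ))
      + I * (2 * a / Real.pi) * Complex.exp (-(x : ℂ))
        * (1 + Complex.exp (-(I * Real.pi * x / a)))) :
    (∫ x in (-a)..a, Complex.exp (I * ((Real.pi / a : ℝ) - I) * x) * φ x) = 0 ∧
    (∫ x in (-a)..a, ‖deriv η x‖ ^ 2) ≠ (∫ x in (-a)..a, ‖deriv φ x‖ ^ 2) := by
  constructor
  ·
    have ha' : (a : ℂ) ≠ 0 := ofReal_ne_zero.mpr ha.ne'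
    have hne : (I * ((Real.pi / a : ℝ) : ℂ)) ≠ 0 := by
      simp [Complex.ext_iff]; exact ha.ne'
    have key : ∀ x : ℝ, Complex.exp (I * ((Real.pi / a : ℝ) - I) * x) * φ x
        = Complex.exp ((I * ((Real.pi / a : ℝ) : ℂ)) * x) := by
      intro x
      rw [hφ, ← Complex.exp_add]
      congr 1
      have : I * I = -1 := Complex.I_mul_I
      ring_nf
      rw [Complex.I_sq]
      ring
    rw [intervalIntegral.integral_congr (fun x _ => key x),
      integral_exp_mul_complex hne]
    have e1 : I * ((Real.pi / a : ℝ) : ℂ) * (a : ℂ) = Real.pi * I := by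
      push_cast; field_simp; try tauto
    have e2 : I * ((Real.pi / a : ℝ) : ℂ) * ((-a : ℝ) : ℂ) = -(Real.pi * I) := by
      push_cast; field_simp; try tauto
    rw [e1, e2, Complex.exp_neg, Complex.exp_pi_mul_I]
    norm_num
  ·
    have ha' : (a : ℂ) ≠ 0 := ofReal_ne_zero.mpr ha.ne'
    have hπ' : ((Real.pi : ℝ) : ℂ) ≠ 0 := ofReal_ne_zero.mpr Real.pi_ne_zero
    set m : ℝ := Real.pi / a with hm
    set c : ℝ := 2 * a / Real.pi with hc
    have hm0 : 0 < m := div_pos Real.pi_pos ha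
    have hcm : c * m = 2 := by
      rw [hc, hm]; field_simp
    have hma : m * a = Real.pi := by rw [hm]; field_simp
    set ν : ℂ := -1 - I * m with hν
    set u : ℂ := -(1 + I * c) with hu
    set v : ℂ := I * c * ν with hv
    set μ : ℂ := -2 + I * m with hμ
    -- rewrite η as sum of exponentials
    have hηfun : η = fun x : ℝ => Complex.exp ((-1 : ℂ) * x)
        + (I * c) * Complex.exp ((-1 : ℂ) * x) + (I * c) * Complex.exp (ν * x) := by
      funext x
      rw [hη x]
      have h2 : Complex.exp ((-1 : ℂ) * x) * Complex.exp (-(I * Real.pi * x / a))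
          = Complex.exp (ν * x) := by
        rw [← Complex.exp_add]
        congr 1
        rw [hν, hm]; push_cast; field_simp; ring
      have h1 : -(x : ℂ) = (-1 : ℂ) * x := by ring
      have hcc : (I * (2 * (a : ℂ) / (Real.pi : ℂ))) = I * (c : ℂ) := by
        rw [hc]; push_cast; ring
      rw [mul_add, mul_one, hcc, h1, mul_assoc (I * (c : ℂ)), h2]; ring
    -- derivative of η
    have hder : ∀ x : ℝ, HasDerivAt η
        (u * Complex.exp ((-1 : ℂ) * x) + v * Complex.exp (ν * x)) x := by
      intro x
      rw [hηfun]
      have h1 := hasDerivAt_cexp_mul' (-1 : ℂ) x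
      have h2 := hasDerivAt_cexp_mul' ν x
      have h3 := (h1.add (h1.const_mul (I * (c : ℂ)))).add (h2.const_mul (I * (c : ℂ)))
      convert h3 using 1
      · rfl
      · rfl
      rw [hu, hv]; ring
    have hde : ∀ x : ℝ, deriv η x
        = u * Complex.exp ((-1 : ℂ) * x) + v * Complex.exp (ν * x) :=
      fun x => (hder x).deriv
    set Q : ℂ := u * (starRingEnd ℂ) v with hQ
    set P : ℂ := u * (starRingEnd ℂ) u + v * (starRingEnd ℂ) v with hP
    set G : ℝ → ℂ := fun x => P * Complex.exp ((-2 : ℂ) * x) + Q * Complex.exp (μ * x)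
        + (starRingEnd ℂ) Q * Complex.exp ((starRingEnd ℂ) μ * x) with hG
    have hmul : ∀ (α β : ℂ) (x : ℝ),
        Complex.exp (α * x) * Complex.exp (β * x) = Complex.exp ((α + β) * x) := by
      intro α β x; rw [← Complex.exp_add]; ring_nf
    have hνc : (starRingEnd ℂ) ν = -1 + I * m := by
      rw [hν]; simp [map_sub, map_mul, Complex.conj_I, Complex.conj_ofReal]
    have hμc : (starRingEnd ℂ) μ = -2 - I * m := by
      rw [hμ]; simp [map_add, map_mul, map_ofNat, Complex.conj_I, Complex.conj_ofReal]
      ring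
    have hGeq : ∀ x : ℝ, ((‖deriv η x‖ ^ 2 : ℝ) : ℂ) = G x := by
      intro x
      have : ((‖deriv η x‖ ^ 2 : ℝ) : ℂ) = deriv η x * (starRingEnd ℂ) (deriv η x) := by
        rw [Complex.mul_conj]
        norm_cast
        rw [← Complex.sq_norm]
      rw [this, hde x]
      have hconj : (starRingEnd ℂ) (u * Complex.exp ((-1 : ℂ) * x) + v * Complex.exp (ν * x))
          = (starRingEnd ℂ) u * Complex.exp ((-1 : ℂ) * x)
            + (starRingEnd ℂ) v * Complex.exp ((starRingEnd ℂ) ν * x) := by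
        simp only [map_add, map_mul, ← Complex.exp_conj, Complex.conj_ofReal, map_neg, map_one]
      rw [hconj]
      have expand : ∀ A B C D E1 E2 E3 E4 : ℂ,
          (A * E1 + B * E2) * (C * E3 + D * E4)
          = (A * C) * (E1 * E3) + (A * D) * (E1 * E4) + (B * C) * (E2 * E3)
            + (B * D) * (E2 * E4) := by intros; ring
      rw [expand, hmul, hmul, hmul, hmul]
      have g1 : ((-1 : ℂ) + -1) = (-2 : ℂ) := by norm_num
      have g2 : ((-1 : ℂ) + (starRingEnd ℂ) ν) = μ := by rw [hνc, hμ]; ring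
      have g3 : (ν + (-1 : ℂ)) = (starRingEnd ℂ) μ := by rw [hν, hμc]; ring
      have g4 : (ν + (starRingEnd ℂ) ν) = (-2 : ℂ) := by rw [hν, hνc]; ring
      rw [g1, g2, g3, g4, hG]
      have g5 : (starRingEnd ℂ) Q = v * (starRingEnd ℂ) u := by
        rw [hQ]; simp [map_mul, Complex.conj_conj]; ring
      rw [g5, hP, hQ]
      ring
    -- integral of G
    have hμre : μ.re = -2 := by simp [hμ]
    have hμ0 : μ ≠ 0 := by intro h; rw [h] at hμre; norm_num at hμre
    have hμc0 : (starRingEnd ℂ) μ ≠ 0 := by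
      rw [hμc]; intro h
      have h2 := congrArg Complex.re h
      simp at h2
    have hii : ∀ k : ℂ, IntervalIntegrable (fun x : ℝ => Complex.exp (k * x))
        MeasureTheory.volume (-a) a := by
      intro k
      have : Continuous (fun x : ℝ => Complex.exp (k * x)) :=
        Complex.continuous_exp.comp (continuous_const.mul Complex.continuous_ofReal)
      exact this.intervalIntegrable _ _
    set s : ℝ := Real.exp (2 * a) - Real.exp (-(2 * a)) with hsdef
    have hs : 0 < s := by
      rw [hsdef]; have := Real.exp_lt_exp.mpr (show -(2*a) < 2*a by linarith)
      linarith
    have E1 : Complex.exp ((-2 : ℂ) * ((a : ℝ) : ℂ)) = ((Real.exp (-(2 * a)) : ℝ) : ℂ) := by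
      rw [Complex.ofReal_exp]; congr 1; push_cast; ring
    have E2 : Complex.exp ((-2 : ℂ) * (((-a : ℝ)) : ℂ)) = ((Real.exp (2 * a) : ℝ) : ℂ) := by
      rw [Complex.ofReal_exp]; congr 1; push_cast; ring
    have E3 : Complex.exp (μ * ((a : ℝ) : ℂ)) = -((Real.exp (-(2 * a)) : ℝ) : ℂ) := by
      have h' : μ * ((a : ℝ) : ℂ) = ((-(2 * a) : ℝ) : ℂ) + Real.pi * I := by
        rw [hμ, ← hma]; push_cast; ring
      rw [h', Complex.exp_add, Complex.exp_pi_mul_I, Complex.ofReal_exp]; ring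
    have E4 : Complex.exp (μ * (((-a : ℝ)) : ℂ)) = -((Real.exp (2 * a) : ℝ) : ℂ) := by
      have h' : μ * (((-a : ℝ)) : ℂ) = ((2 * a : ℝ) : ℂ) + -(Real.pi * I) := by
        rw [hμ, ← hma]; push_cast; ring
      rw [h', Complex.exp_add, Complex.exp_neg, Complex.exp_pi_mul_I, Complex.ofReal_exp]
      norm_num
    have E5 : Complex.exp ((starRingEnd ℂ) μ * ((a : ℝ) : ℂ))
        = -((Real.exp (-(2 * a)) : ℝ) : ℂ) := by
      have h' : (starRingEnd ℂ) μ * ((a : ℝ) : ℂ) = ((-(2 * a) : ℝ) : ℂ) + -(Real.pi * I) := by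
        rw [hμc, ← hma]; push_cast; ring
      rw [h', Complex.exp_add, Complex.exp_neg, Complex.exp_pi_mul_I, Complex.ofReal_exp]
      norm_num
    have E6 : Complex.exp ((starRingEnd ℂ) μ * (((-a : ℝ)) : ℂ))
        = -((Real.exp (2 * a) : ℝ) : ℂ) := by
      have h' : (starRingEnd ℂ) μ * (((-a : ℝ)) : ℂ) = ((2 * a : ℝ) : ℂ) + Real.pi * I := by
        rw [hμc, ← hma]; push_cast; ring
      rw [h', Complex.exp_add, Complex.exp_pi_mul_I, Complex.ofReal_exp]; ring
    have hL : ((∫ x in (-a)..a, ‖deriv η x‖ ^ 2 : ℝ) : ℂ)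
        = P * ((s : ℂ) / 2) + Q * ((s : ℂ) / μ)
          + (starRingEnd ℂ) Q * ((s : ℂ) / (starRingEnd ℂ) μ) := by
      rw [← intervalIntegral.integral_ofReal,
        intervalIntegral.integral_congr (fun x _ => hGeq x), hG]
      rw [intervalIntegral.integral_add (((hii _).const_mul _).add ((hii _).const_mul _))
          ((hii _).const_mul _),
        intervalIntegral.integral_add ((hii _).const_mul _) ((hii _).const_mul _),
        intervalIntegral.integral_const_mul, intervalIntegral.integral_const_mul,
        intervalIntegral.integral_const_mul,
        integral_exp_mul_complex (by norm_num : (-2 : ℂ) ≠ 0),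
        integral_exp_mul_complex hμ0, integral_exp_mul_complex hμc0,
        E1, E2, E3, E4, E5, E6, hsdef]
      push_cast
      congr 1
      · congr 1
        · congr 1; ring
        · congr 1; ring
      · congr 1; ring
    -- φ side
    have hφfun : φ = fun x : ℝ => Complex.exp ((-1 : ℂ) * x) := by
      funext x; rw [hφ x]; congr 1; ring
    have hdφ : ∀ x : ℝ, deriv φ x = (-1 : ℂ) * Complex.exp ((-1 : ℂ) * x) := by
      intro x; rw [hφfun]; exact (hasDerivAt_cexp_mul' (-1) x).deriv
    have hφGeq : ∀ x : ℝ, ((‖deriv φ x‖ ^ 2 : ℝ) : ℂ) = Complex.exp ((-2 : ℂ) * x) := by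
      intro x
      have h0 : ((‖deriv φ x‖ ^ 2 : ℝ) : ℂ) = deriv φ x * (starRingEnd ℂ) (deriv φ x) := by
        rw [Complex.mul_conj]; norm_cast
        rw [← Complex.sq_norm]
      rw [h0, hdφ x]
      have h1 : (starRingEnd ℂ) ((-1 : ℂ) * Complex.exp ((-1 : ℂ) * x))
          = (-1 : ℂ) * Complex.exp ((-1 : ℂ) * x) := by
        simp only [map_mul, map_neg, map_one, ← Complex.exp_conj, Complex.conj_ofReal]
      rw [h1]
      have h2 : ((-1 : ℂ) * Complex.exp ((-1 : ℂ) * x)) * ((-1 : ℂ) * Complex.exp ((-1 : ℂ) * x))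
          = Complex.exp ((-1 : ℂ) * x) * Complex.exp ((-1 : ℂ) * x) := by ring
      rw [h2, hmul]
      norm_num
    have hR : ((∫ x in (-a)..a, ‖deriv φ x‖ ^ 2 : ℝ) : ℂ) = ((s : ℝ) : ℂ) / 2 := by
      rw [← intervalIntegral.integral_ofReal,
        intervalIntegral.integral_congr (fun x _ => hφGeq x),
        integral_exp_mul_complex (by norm_num : (-2 : ℂ) ≠ 0), E1, E2, hsdef]
      push_cast; ring
    -- the key complex identity
    have hm0' : ((m : ℝ) : ℂ) ≠ 0 := ofReal_ne_zero.mpr hm0.ne'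
    have hcm' : ((c : ℝ) : ℂ) * ((m : ℝ) : ℂ) = 2 := by
      rw [← Complex.ofReal_mul, hcm]; norm_num
    have hQex : Q = -(1 + I * c) * (-I * c * (-1 + I * m)) := by
      rw [hQ, hu, hv, map_mul, map_mul, Complex.conj_I, Complex.conj_ofReal, hνc]
    have hQcex : (starRingEnd ℂ) Q = (I * c * (-1 - I * m)) * (-(1 - I * c)) := by
      have g5 : (starRingEnd ℂ) Q = v * (starRingEnd ℂ) u := by
        rw [hQ]; simp [map_mul, Complex.conj_conj]; ring
      rw [g5, hu, hv, hν]
      simp only [map_neg, map_add, map_mul, map_one, Complex.conj_I, Complex.conj_ofReal]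
      ring
    have hPex : P = (-(1 + I * c)) * (-(1 - I * c))
        + (I * c * (-1 - I * m)) * (-I * c * (-1 + I * m)) := by
      rw [hP, hu, hv, hν]
      simp only [map_neg, map_add, map_sub, map_mul, map_one, Complex.conj_I, Complex.conj_ofReal]
      ring
    have hZ : P * ((s : ℂ) / 2) + Q * ((s : ℂ) / μ)
        + (starRingEnd ℂ) Q * ((s : ℂ) / (starRingEnd ℂ) μ) = ((5 * s / 2 : ℝ) : ℂ) := by
      rw [hQcex, hQex, hPex, hμc, hμ]
      rw [show ((5 * s / 2 : ℝ) : ℂ) = 5 * (s : ℂ) / 2 by push_cast; ring]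
      exact keylemma _ _ _ hcm' (by rw [← hμ]; exact hμ0) (by rw [← hμc]; exact hμc0)
    have hLeq : (∫ x in (-a)..a, ‖deriv η x‖ ^ 2) = 5 * s / 2 := by
      have h := hL.trans hZ
      exact_mod_cast h
    have hReq : (∫ x in (-a)..a, ‖deriv φ x‖ ^ 2) = s / 2 := by
      have h : ((∫ x in (-a)..a, ‖deriv φ x‖ ^ 2 : ℝ) : ℂ) = ((s / 2 : ℝ) : ℂ) := by
        rw [hR]; push_cast; ring
      exact_mod_cast h
    rw [hLeq, hReq]
    intro h
    nlinarith [hs]
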